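/- Let A ∈ ℝ^{n×n} satisfy A G_d = (G_d + μ Iₙ) A for some matrix G_d ∈ ℝ^{n×n} and μ ∈ ℝ, and let B ∈ ℝ^{n×m} satisfy G_d B = B. Then the linear vector field x ↦ A x is d-homogeneous of degree μ with respect to d(s) = e^{s G_d}, i.e. A e^{s G_d} x = e^{μs} e^{s G_d} A x for all x ∈ ℝ^n and s ∈ ℝ. -/

import Mathlib

open Matrix

section aux

attribute [local instance] Matrix.linftyOpNormedAddCommGroup Matrix.linftyOpNormedSpace
  Matrix.linftyOpNormedRing Matrix.linftyOpNormedAlgebra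

lemma conj_exp_aux {n : ℕ} (A X Y : Matrix (Fin n) (Fin n) ℝ) (h : A * X = Y * A) :
    A * NormedSpace.exp X = NormedSpace.exp Y * A := by
  have hk : ∀ k : ℕ, A * X ^ k = Y ^ k * A := by
    intro k
    induction k with
    | zero => simp
    | succ k ih =>
      rw [pow_succ, ← mul_assoc, ih, mul_assoc, h, ← mul_assoc, ← pow_succ]
  rw [NormedSpace.exp_eq_tsum ℝ]
  beta_reduce
  have hsX := NormedSpace.expSeries_summable' (𝕂 := ℝ) X
  have hsY := NormedSpace.expSeries_summable' (𝕂 := ℝ) Y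
  erw [← (hsX.tsum_mul_left A), ← (hsY.tsum_mul_right A)]
  congr 1
  funext k
  rw [mul_smul_comm, hk, smul_mul_assoc]

lemma exp_smul_one_aux {n : ℕ} (r : ℝ) :
    NormedSpace.exp (r • (1 : Matrix (Fin n) (Fin n) ℝ)) = Real.exp r • 1 := by
  have : r • (1 : Matrix (Fin n) (Fin n) ℝ) = algebraMap ℝ _ r := by
    simp [Algebra.algebraMap_eq_smul_one]
  erw [this, ← NormedSpace.algebraMap_exp_comm, ← Real.exp_eq_exp_ℝ, Algebra.algebraMap_eq_smul_one]

lemma exp_add_smul_aux {n : ℕ} (G : Matrix (Fin n) (Fin n) ℝ) (r : ℝ) :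
    NormedSpace.exp (G + r • (1 : Matrix (Fin n) (Fin n) ℝ)) =
      Real.exp r • NormedSpace.exp G := by
  erw [NormedSpace.exp_add_of_commute, exp_smul_one_aux, mul_smul_comm, mul_one]
  · rfl
  exact (Commute.one_right G).smul_right r

end aux

theorem stmt9 {n m : ℕ} (A Gd : Matrix (Fin n) (Fin n) ℝ) (μ : ℝ)
    (hA : A * Gd = (Gd + μ • (1 : Matrix (Fin n) (Fin n) ℝ)) * A)
    (B : Matrix (Fin n) (Fin m) ℝ) (hB : Gd * B = B) :
    ∀ (x : Fin n → ℝ) (s : ℝ),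
      A *ᵥ (NormedSpace.exp (s • Gd) *ᵥ x) =
        Real.exp (μ * s) • (NormedSpace.exp (s • Gd) *ᵥ (A *ᵥ x)) := by
  intro x s
  have h : A * (s • Gd) = (s • Gd + (μ * s) • (1 : Matrix (Fin n) (Fin n) ℝ)) * A := by
    rw [mul_smul_comm, hA, add_mul, add_mul, smul_mul_assoc, smul_mul_assoc, smul_mul_assoc,
      smul_add, smul_smul, mul_comm s μ]
  have key := conj_exp_aux A (s • Gd) (s • Gd + (μ * s) • 1) h
  rw [exp_add_smul_aux] at key
  rw [mulVec_mulVec, key, ← mulVec_mulVec, smul_mulVec]
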